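/- For distinct x, y in ℝ_{>0} \ {1} with all five arguments lying in ℝ_{>0} \ {1}, the Rogers dilogarithm satisfies the five-term relation: L(x) - L(y) + L(y/x) - L((y-1)/(x-1)) + L((1-1/y)/(1-1/x)) ≡ 0 mod π²/6 (i.e., the left-hand side is an integer multiple of ζ(2) = π²/6). -/

import Mathlib

open Real Filter Topology

noncomputable def Li2 (x : ℝ) : ℝ := ∑' n : ℕ, x ^ (n + 1) / (n + 1) ^ 2

lemma sq_summable : Summable (fun n : ℕ => 1 / ((n : ℝ) + 1) ^ 2) := by
  have h : Summable (fun n : ℕ => 1 / (n : ℝ) ^ 2) :=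
    Real.summable_one_div_nat_pow.mpr one_lt_two
  have := (summable_nat_add_iff 1).mpr h
  simpa using this

lemma li2_norm_bound {x : ℝ} (h : |x| ≤ 1) (n : ℕ) :
    ‖x ^ (n + 1) / ((n : ℝ) + 1) ^ 2‖ ≤ 1 / ((n : ℝ) + 1) ^ 2 := by
  have hn : (0:ℝ) < (n:ℝ) + 1 := by positivity
  rw [norm_div, norm_pow, norm_pow, Real.norm_eq_abs, Real.norm_eq_abs, abs_of_pos hn]
  gcongr
  exact pow_le_one₀ (abs_nonneg x) h

lemma li2_summable {x : ℝ} (h : |x| ≤ 1) :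
    Summable (fun n : ℕ => x ^ (n + 1) / ((n : ℝ) + 1) ^ 2) :=
  Summable.of_norm_bounded sq_summable (li2_norm_bound h)

lemma li2_hasSum {x : ℝ} (h : |x| ≤ 1) :
    HasSum (fun n : ℕ => x ^ (n + 1) / ((n : ℝ) + 1) ^ 2) (Li2 x) :=
  (li2_summable h).hasSum

lemma li2_one : Li2 1 = π ^ 2 / 6 := by
  have h := hasSum_zeta_two
  have h2 : HasSum (fun n : ℕ => (1:ℝ) / ((n:ℝ) + 1) ^ 2) (π ^ 2 / 6) := by
    have h' : HasSum (fun n : ℕ => (1:ℝ) / ((n : ℝ) + 1) ^ 2) (π ^ 2 / 6) := by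
      have h2 := (hasSum_nat_add_iff' (f := fun n : ℕ => (1:ℝ) / (n : ℝ) ^ 2) 1).mpr h
      simp only [Finset.range_one, Finset.sum_singleton, Nat.cast_zero] at h2
      norm_num at h2
      simpa only [one_div] using h2
    exact h'
  have h3 : HasSum (fun n : ℕ => (1:ℝ) ^ (n + 1) / ((n:ℝ) + 1) ^ 2) (π ^ 2 / 6) := by
    simpa using h2
  exact h3.tsum_eq

lemma li2_continuousOn : ContinuousOn Li2 (Set.Icc (-1 : ℝ) 1) := by
  have : ContinuousOn (fun x : ℝ => ∑' n : ℕ, x ^ (n + 1) / ((n : ℝ) + 1) ^ 2)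
      (Set.Icc (-1 : ℝ) 1) := by
    refine continuousOn_tsum (fun n => ?_) sq_summable (fun n x hx => ?_)
    · exact (continuousOn_pow _).div_const _
    · exact li2_norm_bound (abs_le.mpr ⟨hx.1, hx.2⟩) n
  exact this

lemma li2_hasDerivAt {x : ℝ} (h0 : 0 < x) (h1 : x < 1) :
    HasDerivAt Li2 (-Real.log (1 - x) / x) x := by
  set r : ℝ := (1 + x) / 2 with hr
  have hxr : x < r := by simp only [hr]; linarith
  have hr1 : r < 1 := by simp only [hr]; linarith
  have hr0 : 0 < r := by simp only [hr]; linarith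
  have key : HasDerivAt (fun z : ℝ => ∑' n : ℕ, z ^ (n + 1) / ((n : ℝ) + 1) ^ 2)
      (∑' n : ℕ, x ^ n / ((n : ℝ) + 1)) x := by
    refine hasDerivAt_tsum_of_isPreconnected (u := fun n : ℕ => r ^ n)
      (summable_geometric_of_lt_one hr0.le hr1) (isOpen_Ioo (a := -r) (b := r))
      (convex_Ioo _ _).isPreconnected (g := fun n t => t ^ (n + 1) / ((n : ℝ) + 1) ^ 2)
      (g' := fun n t => t ^ n / ((n : ℝ) + 1)) (fun n t ht => ?_) (fun n t ht => ?_)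
      (y₀ := 0) ⟨by linarith, hr0⟩ ?_ ⟨by linarith, hxr⟩
    · have := (hasDerivAt_pow (n + 1) t).div_const (((n : ℝ) + 1) ^ 2)
      refine this.congr_deriv ?_
      have hn : ((n : ℝ) + 1) ≠ 0 := by positivity
      push_cast
      field_simp
    · rw [norm_div, norm_pow, Real.norm_eq_abs, Real.norm_eq_abs]
      have ht' : |t| ≤ r := by
        rw [abs_le]; exact ⟨ht.1.le, ht.2.le⟩
      have hn : (1:ℝ) ≤ |(n : ℝ) + 1| := by
        rw [abs_of_pos (by positivity)]; simp
      calc |t| ^ n / |(n : ℝ) + 1| ≤ |t| ^ n / 1 := by gcongr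
        _ = |t| ^ n := div_one _
        _ ≤ r ^ n := pow_le_pow_left₀ (abs_nonneg t) ht' n
    · simp only [zero_pow (Nat.succ_ne_zero _), zero_div]
      exact summable_zero
  have hsum : (∑' n : ℕ, x ^ n / ((n : ℝ) + 1)) = -Real.log (1 - x) / x := by
    have h := hasSum_pow_div_log_of_abs_lt_one (x := x)
      (by rw [abs_of_pos h0]; exact h1)
    have h2 := h.div_const x
    have heq : (fun n : ℕ => x ^ (n + 1) / ((n : ℝ) + 1) / x)
        = fun n : ℕ => x ^ n / ((n : ℝ) + 1) := by
      funext n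
      rw [pow_succ]
      field_simp
    rw [heq] at h2
    exact h2.tsum_eq
  rw [← hsum]
  exact key

noncomputable def rogersL (x : ℝ) : ℝ :=
  if x < 1 then Li2 x + (1 / 2) * Real.log x * Real.log (1 - x)
  else Real.pi ^ 2 / 3 - (Li2 (1 / x) + (1 / 2) * Real.log (1 / x) * Real.log (1 - 1 / x))

noncomputable def rogersAux (t : ℝ) : ℝ := Li2 t + (1 / 2) * Real.log t * Real.log (1 - t)

noncomputable def ellL (t : ℝ) : ℝ :=
  -(1 / 2) * (Real.log (1 - t) / t + Real.log t / (1 - t))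

lemma rogersAux_hasDerivAt {t : ℝ} (h0 : 0 < t) (h1 : t < 1) :
    HasDerivAt rogersAux (ellL t) t := by
  have hne : t ≠ 0 := ne_of_gt h0
  have h1t : (1 : ℝ) - t ≠ 0 := by intro h; apply absurd h1; linarith [(sub_eq_zero.mp h)]
  have hlog2 : HasDerivAt (fun s : ℝ => Real.log (1 - s)) ((1 - t)⁻¹ * (-1)) t :=
    (Real.hasDerivAt_log h1t).comp t ((hasDerivAt_id t).const_sub 1)
  have hprod : HasDerivAt (fun s : ℝ => 1 / 2 * Real.log s * Real.log (1 - s))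
      (1 / 2 * t⁻¹ * Real.log (1 - t) + 1 / 2 * Real.log t * ((1 - t)⁻¹ * (-1))) t :=
    ((Real.hasDerivAt_log hne).const_mul (1 / 2)).mul hlog2
  have htot := (li2_hasDerivAt h0 h1).add hprod
  have : rogersAux = fun s => Li2 s + 1 / 2 * Real.log s * Real.log (1 - s) := rfl
  rw [this]
  refine htot.congr_deriv ?_
  unfold ellL
  field_simp
  ring

lemma rogersL_hasDerivAt {t : ℝ} (h0 : 0 < t) (h1 : t ≠ 1) :
    HasDerivAt rogersL (ellL t) t := by
  rcases lt_or_gt_of_ne h1 with hlt | hgt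
  · have heq : rogersL =ᶠ[nhds t] rogersAux := by
      filter_upwards [Iio_mem_nhds hlt] with s hs
      simp only [rogersL, rogersAux]
      rw [if_pos (Set.mem_Iio.mp hs)]
    exact (rogersAux_hasDerivAt h0 hlt).congr_of_eventuallyEq heq
  · have htne : t ≠ 0 := ne_of_gt h0
    have ht1 : t - 1 ≠ 0 := sub_ne_zero.mpr h1
    have hinv0 : 0 < t⁻¹ := by positivity
    have hinv1 : t⁻¹ < 1 := by
      rw [inv_lt_one_iff₀]; right; exact hgt
    have hinner : HasDerivAt (fun s : ℝ => s⁻¹) (-(t ^ 2)⁻¹) t := hasDerivAt_inv htne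
    have hcomp := (rogersAux_hasDerivAt hinv0 hinv1).comp t hinner
    have hkey : HasDerivAt (fun s : ℝ => π ^ 2 / 3 - rogersAux s⁻¹)
        (-(ellL t⁻¹ * -(t ^ 2)⁻¹)) t := hcomp.const_sub _
    have heq : rogersL =ᶠ[nhds t] fun s => π ^ 2 / 3 - rogersAux s⁻¹ := by
      filter_upwards [Ioi_mem_nhds hgt] with s hs
      have h' : ¬ s < 1 := not_lt.mpr (le_of_lt hs)
      simp only [rogersL, rogersAux]
      rw [if_neg h']
      rw [one_div]
    refine HasDerivAt.congr_of_eventuallyEq ?_ heq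
    refine hkey.congr_deriv ?_
    have e1 : Real.log t⁻¹ = -Real.log t := Real.log_inv t
    have e2 : (1 : ℝ) - t⁻¹ = (t - 1) / t := by field_simp
    have e3 : Real.log (1 - t⁻¹) = Real.log (t - 1) - Real.log t := by
      rw [e2, Real.log_div ht1 htne]
    have e4 : Real.log (1 - t) = Real.log (t - 1) := by
      rw [show (1 : ℝ) - t = -(t - 1) by ring, Real.log_neg_eq_log]
    have h1t : (1 : ℝ) - t ≠ 0 := by intro h; exact ht1 (by linarith [sub_eq_zero.mp h])
    have h1ti : (1 : ℝ) - t⁻¹ ≠ 0 := by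
      rw [e2]; exact div_ne_zero ht1 htne
    unfold ellL
    rw [e1, e3, e4]
    field_simp
    ring

lemma rogersL_continuousAt {t : ℝ} (h0 : 0 < t) (h1 : t ≠ 1) : ContinuousAt rogersL t :=
  (rogersL_hasDerivAt h0 h1).continuousAt

lemma tendsto_loglog : Tendsto (fun t : ℝ => Real.log t * Real.log (1 - t))
    (nhdsWithin 1 (Set.Iio 1)) (nhds 0) := by
  have hlog0 : Tendsto (fun s : ℝ => Real.log s * s) (nhdsWithin 0 (Set.Ioi 0)) (nhds 0) := by
    have := tendsto_log_mul_rpow_nhdsGT_zero one_pos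
    refine this.congr' ?_
    filter_upwards [self_mem_nhdsWithin] with s _
    rw [Real.rpow_one]
  have habs : Tendsto (fun s : ℝ => 2 * |Real.log s * s|) (nhdsWithin 0 (Set.Ioi 0)) (nhds 0) := by
    have := (hlog0.abs).const_mul 2
    simpa using this
  have hbound : ∀ᶠ s in nhdsWithin 0 (Set.Ioi 0),
      ‖Real.log (1 - s) * Real.log s‖ ≤ 2 * |Real.log s * s| := by
    filter_upwards [Ioo_mem_nhdsGT_of_mem
      (Set.mem_Ico.mpr ⟨le_refl (0:ℝ), by norm_num⟩ : (0:ℝ) ∈ Set.Ico 0 (1/2))] with s hs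
    obtain ⟨hs0, hs2⟩ := hs
    have h1s : (0:ℝ) < 1 - s := by linarith
    have key : |Real.log (1 - s)| ≤ 2 * s := by
      have hneg : Real.log (1 - s) ≤ 0 := Real.log_nonpos (by linarith) (by linarith)
      rw [abs_of_nonpos hneg]
      have e : -Real.log (1 - s) = Real.log (1 - s)⁻¹ := (Real.log_inv _).symm
      rw [e]
      have h2 : Real.log (1 - s)⁻¹ ≤ (1 - s)⁻¹ - 1 :=
        Real.log_le_sub_one_of_pos (by positivity)
      have h3 : (1 - s)⁻¹ ≤ 2 := by
        rw [inv_le_comm₀ h1s (by norm_num)]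
        linarith
      have h4 : (1 - s)⁻¹ - 1 = s * (1 - s)⁻¹ := by
        field_simp
        ring
      nlinarith [inv_pos.mpr h1s]
    rw [Real.norm_eq_abs, abs_mul]
    have e : 2 * |Real.log s * s| = 2 * s * |Real.log s| := by
      rw [abs_mul, abs_of_pos hs0]; ring
    rw [e]
    gcongr
  have hsq : Tendsto (fun s : ℝ => Real.log (1 - s) * Real.log s)
      (nhdsWithin 0 (Set.Ioi 0)) (nhds 0) := squeeze_zero_norm' hbound habs
  have hmap : Tendsto (fun t : ℝ => 1 - t) (nhdsWithin 1 (Set.Iio 1))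
      (nhdsWithin 0 (Set.Ioi 0)) := by
    refine tendsto_nhdsWithin_of_tendsto_nhds_of_eventually_within _ ?_ ?_
    · have h : Tendsto (fun t : ℝ => 1 - t) (nhds 1) (nhds 0) := by
        have h' : Continuous (fun t : ℝ => 1 - t) := by continuity
        have := h'.tendsto (1:ℝ)
        simpa using this
      exact h.mono_left nhdsWithin_le_nhds
    · filter_upwards [self_mem_nhdsWithin] with t ht
      simp only [Set.mem_Iio] at ht
      simp only [Set.mem_Ioi]
      linarith
  have := hsq.comp hmap
  refine this.congr fun t => ?_
  simp only [Function.comp_apply, sub_sub_cancel]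

lemma tendsto_rogersAux_one :
    Tendsto rogersAux (nhdsWithin 1 (Set.Iio 1)) (nhds (π ^ 2 / 6)) := by
  have hLi2 : Tendsto Li2 (nhdsWithin 1 (Set.Iio 1)) (nhds (π ^ 2 / 6)) := by
    have hc : ContinuousWithinAt Li2 (Set.Icc (-1 : ℝ) 1) 1 :=
      li2_continuousOn 1 ⟨by norm_num, le_refl 1⟩
    have h1 : nhdsWithin (1:ℝ) (Set.Iio 1) = nhdsWithin 1 (Set.Ioo (-1:ℝ) 1) :=
      (nhdsWithin_Ioo_eq_nhdsLT (by norm_num : (-1:ℝ) < 1)).symm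
    rw [h1, ← li2_one]
    exact hc.tendsto.mono_left (nhdsWithin_mono _ Set.Ioo_subset_Icc_self)
  have hprod := tendsto_loglog.const_mul (1/2 : ℝ)
  have htot := hLi2.add hprod
  have : rogersAux = fun t => Li2 t + 1 / 2 * (Real.log t * Real.log (1 - t)) := by
    funext t; simp only [rogersAux]; ring
  rw [this]
  simpa using htot

lemma tendsto_rogersL_one :
    Tendsto rogersL (nhdsWithin 1 {(1:ℝ)}ᶜ) (nhds (π ^ 2 / 6)) := by
  rw [← nhdsLT_sup_nhdsGT, Filter.tendsto_sup]
  constructor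
  · refine tendsto_rogersAux_one.congr' ?_
    filter_upwards [self_mem_nhdsWithin] with t ht
    simp only [Set.mem_Iio] at ht
    simp only [rogersL, rogersAux, if_pos ht]
  · have hinvmap : Tendsto (fun t : ℝ => t⁻¹) (nhdsWithin 1 (Set.Ioi 1))
        (nhdsWithin 1 (Set.Iio 1)) := by
      refine tendsto_nhdsWithin_of_tendsto_nhds_of_eventually_within _ ?_ ?_
      · have : Tendsto (fun t : ℝ => t⁻¹) (nhds 1) (nhds 1) := by
          have := (continuousAt_inv₀ (one_ne_zero : (1:ℝ) ≠ 0))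
          simpa using this.tendsto
        exact this.mono_left nhdsWithin_le_nhds
      · filter_upwards [self_mem_nhdsWithin] with t ht
        simp only [Set.mem_Ioi] at ht
        simp only [Set.mem_Iio]
        rw [inv_lt_one_iff₀]; right; exact ht
    have hcomp := tendsto_rogersAux_one.comp hinvmap
    have h2 : Tendsto (fun t : ℝ => π ^ 2 / 3 - rogersAux t⁻¹)
        (nhdsWithin 1 (Set.Ioi 1)) (nhds (π ^ 2 / 3 - π ^ 2 / 6)) :=
      hcomp.const_sub _
    have h3 : π ^ 2 / 3 - π ^ 2 / 6 = π ^ 2 / 6 := by ring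
    rw [h3] at h2
    refine h2.congr' ?_
    filter_upwards [self_mem_nhdsWithin] with t ht
    simp only [Set.mem_Ioi] at ht
    have h' : ¬ t < 1 := not_lt.mpr (le_of_lt ht)
    simp only [rogersL, rogersAux]
    rw [if_neg h']
    simp only [one_div]

lemma ellL_identity {x t : ℝ} (hx0 : x ≠ 0) (hx1 : x ≠ 1) (ht0 : t ≠ 0) (ht1 : t ≠ 1)
    (htx : t ≠ x) :
    0 - ellL t + ellL (t / x) * (1 / x) - ellL ((t - 1) / (x - 1)) * (1 / (x - 1))
      + ellL ((1 - 1 / t) / (1 - 1 / x)) * ((t ^ 2)⁻¹ / (1 - 1 / x)) = 0 := by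
  have hx1' : x - 1 ≠ 0 := sub_ne_zero.mpr hx1
  have ht1' : t - 1 ≠ 0 := sub_ne_zero.mpr ht1
  have hxt : x - t ≠ 0 := sub_ne_zero.mpr (Ne.symm htx)
  have h1x : (1 : ℝ) - x ≠ 0 := fun h => hx1' (by linarith [sub_eq_zero.mp h])
  have h1t : (1 : ℝ) - t ≠ 0 := fun h => ht1' (by linarith [sub_eq_zero.mp h])
  have e1 : 1 - t / x = (x - t) / x := by field_simp
  have e2 : 1 - (t - 1) / (x - 1) = (x - t) / (x - 1) := by
    field_simp
    ring
  have e3 : (1 - 1 / t) / (1 - 1 / x) = x * (t - 1) / (t * (x - 1)) := by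
    field_simp
  have e4 : 1 - x * (t - 1) / (t * (x - 1)) = (x - t) / (t * (x - 1)) := by
    field_simp
    ring
  have e5 : (1 : ℝ) - 1 / x = (x - 1) / x := by field_simp
  rw [e3]
  unfold ellL
  rw [e1, e2, e4, e5]
  have l1 : Real.log (t / x) = Real.log t - Real.log x := Real.log_div ht0 hx0
  have l2 : Real.log ((x - t) / x) = Real.log (x - t) - Real.log x := Real.log_div hxt hx0
  have l3 : Real.log ((t - 1) / (x - 1)) = Real.log (1 - t) - Real.log (1 - x) := by
    rw [Real.log_div ht1' hx1', show t - 1 = -(1 - t) by ring, show x - 1 = -(1 - x) by ring,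
      Real.log_neg_eq_log, Real.log_neg_eq_log]
  have l4 : Real.log ((x - t) / (x - 1)) = Real.log (x - t) - Real.log (1 - x) := by
    rw [Real.log_div hxt hx1', show x - 1 = -(1 - x) by ring, Real.log_neg_eq_log]
  have l5 : Real.log (x * (t - 1) / (t * (x - 1)))
      = Real.log x + Real.log (1 - t) - (Real.log t + Real.log (1 - x)) := by
    rw [Real.log_div (mul_ne_zero hx0 ht1') (mul_ne_zero ht0 hx1'),
      Real.log_mul hx0 ht1', Real.log_mul ht0 hx1',
      show t - 1 = -(1 - t) by ring, show x - 1 = -(1 - x) by ring,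
      Real.log_neg_eq_log, Real.log_neg_eq_log]
  have l6 : Real.log ((x - t) / (t * (x - 1)))
      = Real.log (x - t) - (Real.log t + Real.log (1 - x)) := by
    rw [Real.log_div hxt (mul_ne_zero ht0 hx1'), Real.log_mul ht0 hx1',
      show x - 1 = -(1 - x) by ring, Real.log_neg_eq_log]
  rw [l1, l2, l3, l4, l5, l6]
  have hxt' : t - x ≠ 0 := sub_ne_zero.mpr htx
  field_simp
  ring

theorem rogersL_five_term (x y : ℝ) (hx : 0 < x) (hx1 : x ≠ 1) (hy : 0 < y) (hy1 : y ≠ 1)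
    (hxy : x ≠ y)
    (h3 : 0 < y / x) (h3' : y / x ≠ 1)
    (h4 : 0 < (y - 1) / (x - 1)) (h4' : (y - 1) / (x - 1) ≠ 1)
    (h5 : 0 < (1 - 1 / y) / (1 - 1 / x)) (h5' : (1 - 1 / y) / (1 - 1 / x) ≠ 1) :
    ∃ k : ℤ, rogersL x - rogersL y + rogersL (y / x) - rogersL ((y - 1) / (x - 1))
      + rogersL ((1 - 1 / y) / (1 - 1 / x)) = k * (Real.pi ^ 2 / 6) := by
  refine ⟨1, ?_⟩
  have hx0 : x ≠ 0 := ne_of_gt hx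
  have hy0 : y ≠ 0 := ne_of_gt hy
  have hx1' : x - 1 ≠ 0 := sub_ne_zero.mpr hx1
  have hsame : (x < 1 ∧ y < 1) ∨ (1 < x ∧ 1 < y) := by
    rcases div_pos_iff.mp h4 with ⟨ha, hb⟩ | ⟨ha, hb⟩
    · right; constructor <;> linarith
    · left; constructor <;> linarith
  set a := min x y with hadef
  set b := max x y with hbdef
  have hab : a < b := min_lt_max.mpr hxy
  have ha0 : 0 < a := lt_min hx hy
  have hIfacts : ∀ t ∈ Set.Ioo a b, 0 < t ∧ t ≠ 1 ∧ t ≠ x ∧ 0 < (t - 1) * (x - 1) := by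
    intro t ht
    obtain ⟨ht1, ht2⟩ := ht
    have ht0 : 0 < t := lt_trans ha0 ht1
    have htx : t ≠ x := by
      intro h
      subst h
      have h1 : y < t := min_lt_iff.mp ht1 |>.resolve_left (lt_irrefl t)
      have h2 : t < y := lt_max_iff.mp ht2 |>.resolve_left (lt_irrefl t)
      exact lt_asymm h1 h2
    rcases hsame with ⟨hxlt, hylt⟩ | ⟨hxgt, hygt⟩
    · have hb1 : b < 1 := max_lt hxlt hylt
      have ht1' : t < 1 := lt_trans ht2 hb1
      exact ⟨ht0, ne_of_lt ht1', htx,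
        mul_pos_of_neg_of_neg (by linarith) (by linarith)⟩
    · have ha1 : 1 < a := lt_min hxgt hygt
      have ht1' : 1 < t := lt_trans ha1 ht1
      exact ⟨ht0, ne_of_gt ht1', htx, mul_pos (by linarith) (by linarith)⟩
  set G : ℝ → ℝ := fun t => rogersL x - rogersL t + rogersL (t / x)
    - rogersL ((t - 1) / (x - 1)) + rogersL ((1 - 1 / t) / (1 - 1 / x)) with hGdef
  have h1x0 : (1 : ℝ) - 1 / x ≠ 0 := by
    rw [show (1 : ℝ) - 1 / x = (x - 1) / x by field_simp]
    exact div_ne_zero hx1' hx0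
  -- derivative of G vanishes on Ioo a b
  have hG : ∀ t ∈ Set.Ioo a b, HasDerivAt G 0 t := by
    intro t ht
    obtain ⟨ht0, ht1, htx, htside⟩ := hIfacts t ht
    have ht0' : t ≠ 0 := ne_of_gt ht0
    have ht1' : t - 1 ≠ 0 := sub_ne_zero.mpr ht1
    have h3t : 0 < t / x := div_pos ht0 hx
    have h3t' : t / x ≠ 1 := by
      intro h
      exact htx ((div_eq_one_iff_eq hx0).mp h)
    have h4t : 0 < (t - 1) / (x - 1) := by
      rcases mul_pos_iff.mp htside with ⟨h1, h2⟩ | ⟨h1, h2⟩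
      · exact div_pos h1 h2
      · exact div_pos_of_neg_of_neg h1 h2
    have h4t' : (t - 1) / (x - 1) ≠ 1 := by
      intro h
      have := (div_eq_one_iff_eq hx1').mp h
      exact htx (by linarith)
    have h5t : 0 < (1 - 1 / t) / (1 - 1 / x) := by
      have he : (1 - 1 / t) / (1 - 1 / x) = (x / t) * ((t - 1) / (x - 1)) := by
        field_simp
      rw [he]
      exact mul_pos (div_pos hx ht0) h4t
    have h5t' : (1 - 1 / t) / (1 - 1 / x) ≠ 1 := by
      intro h
      have h' := (div_eq_one_iff_eq h1x0).mp h
      have : 1 / t = 1 / x := by linarith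
      apply htx
      field_simp at this
      linarith
    have H1 := rogersL_hasDerivAt ht0 ht1
    have H2 := (rogersL_hasDerivAt h3t h3t').comp t ((hasDerivAt_id t).div_const x)
    have H3 := (rogersL_hasDerivAt h4t h4t').comp t
      (((hasDerivAt_id t).sub_const 1).div_const (x - 1))
    have h5i : HasDerivAt (fun s : ℝ => (1 - 1 / s) / (1 - 1 / x)) ((t ^ 2)⁻¹ / (1 - 1 / x)) t := by
      simp only [one_div]
      have := ((hasDerivAt_inv ht0').const_sub 1).div_const (1 - x⁻¹)
      refine this.congr_deriv ?_
      ring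
    have H4 := (rogersL_hasDerivAt h5t h5t').comp t h5i
    have Htot := ((((hasDerivAt_const t (rogersL x)).sub H1).add H2).sub H3).add H4
    have hzero := ellL_identity hx0 hx1 ht0' ht1 htx
    have Hfinal : HasDerivAt G (0 - ellL t + ellL (t / x) * (1 / x)
        - ellL ((t - 1) / (x - 1)) * (1 / (x - 1))
        + ellL ((1 - 1 / t) / (1 - 1 / x)) * ((t ^ 2)⁻¹ / (1 - 1 / x))) t := Htot
    rw [hzero] at Hfinal
    exact Hfinal
  -- G is constant on Ioo a b
  have hconst : ∀ u ∈ Set.Ioo a b, ∀ v ∈ Set.Ioo a b, G u = G v := by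
    have key : ∀ u v : ℝ, u ∈ Set.Ioo a b → v ∈ Set.Ioo a b → u < v → G u = G v := by
      intro u v hu hv huv
      have hsub : Set.Icc u v ⊆ Set.Ioo a b := fun s hs =>
        ⟨lt_of_lt_of_le hu.1 hs.1, lt_of_le_of_lt hs.2 hv.2⟩
      have hcont : ContinuousOn G (Set.Icc u v) := fun s hs =>
        ((hG s (hsub hs)).continuousAt).continuousWithinAt
      obtain ⟨c, _, hceq⟩ := exists_hasDerivAt_eq_slope G (fun _ => 0) huv hcont
        (fun s hs => hG s (hsub (Set.Ioo_subset_Icc_self hs)))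
      have hvu : v - u ≠ 0 := sub_ne_zero.mpr (ne_of_gt huv)
      have h0 : (G v - G u) / (v - u) = 0 := hceq.symm
      rw [div_eq_zero_iff] at h0
      rcases h0 with h0 | h0
      · linarith
      · exact absurd h0 hvu
    intro u hu v hv
    rcases lt_trichotomy u v with h | h | h
    · exact key u v hu hv h
    · rw [h]
    · exact (key v u hv hu h).symm
  set t0 : ℝ := (a + b) / 2 with ht0def
  have ht0I : t0 ∈ Set.Ioo a b := ⟨by simp only [ht0def]; linarith, by simp only [ht0def]; linarith⟩
  -- G y = G t0 via continuity at y
  have hyIcc : y ∈ closure (Set.Ioo a b) := by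
    rw [closure_Ioo (ne_of_lt hab)]
    exact ⟨min_le_right x y, le_max_right x y⟩
  haveI hne1 : (nhdsWithin y (Set.Ioo a b)).NeBot := mem_closure_iff_nhdsWithin_neBot.mp hyIcc
  have hGy_cont : ContinuousAt G y := by
    have c1 : ContinuousAt rogersL y := rogersL_continuousAt hy hy1
    have hin2 : ContinuousAt (fun t : ℝ => t / x) y := (continuous_id.div_const x).continuousAt
    have c2 : ContinuousAt (rogersL ∘ fun t : ℝ => t / x) y :=
      ContinuousAt.comp (rogersL_continuousAt h3 h3') hin2
    have hin3 : ContinuousAt (fun t : ℝ => (t - 1) / (x - 1)) y :=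
      ((continuous_id.sub continuous_const).div_const (x - 1)).continuousAt
    have c3 : ContinuousAt (rogersL ∘ fun t : ℝ => (t - 1) / (x - 1)) y :=
      ContinuousAt.comp (rogersL_continuousAt h4 h4') hin3
    have cinner : ContinuousAt (fun t : ℝ => (1 - 1 / t) / (1 - 1 / x)) y := by
      have hi : ContinuousAt (fun t : ℝ => 1 / t) y := by
        simpa [one_div] using continuousAt_inv₀ hy0
      exact (continuousAt_const.sub hi).div_const _
    have c4 : ContinuousAt (rogersL ∘ fun t : ℝ => (1 - 1 / t) / (1 - 1 / x)) y :=
      ContinuousAt.comp (rogersL_continuousAt h5 h5') cinner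
    exact (((continuousAt_const.sub c1).add c2).sub c3).add c4
  have hGy : G y = G t0 := by
    have hT1 : Tendsto G (nhdsWithin y (Set.Ioo a b)) (nhds (G y)) :=
      hGy_cont.continuousWithinAt.tendsto
    have hT2 : Tendsto G (nhdsWithin y (Set.Ioo a b)) (nhds (G t0)) := by
      refine Tendsto.congr' ?_ tendsto_const_nhds
      filter_upwards [self_mem_nhdsWithin] with s hs
      exact hconst t0 ht0I s hs
    exact tendsto_nhds_unique hT1 hT2
  -- G t0 = π²/6 via limit at x
  have hxIcc : x ∈ closure (Set.Ioo a b) := by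
    rw [closure_Ioo (ne_of_lt hab)]
    exact ⟨min_le_left x y, le_max_left x y⟩
  haveI hne2 : (nhdsWithin x (Set.Ioo a b)).NeBot := mem_closure_iff_nhdsWithin_neBot.mp hxIcc
  have hlim : Tendsto G (nhdsWithin x (Set.Ioo a b))
      (nhds (rogersL x - rogersL x + π ^ 2 / 6 - π ^ 2 / 6 + π ^ 2 / 6)) := by
    have T1 : Tendsto (fun _ : ℝ => rogersL x) (nhdsWithin x (Set.Ioo a b))
        (nhds (rogersL x)) := tendsto_const_nhds
    have T2 : Tendsto rogersL (nhdsWithin x (Set.Ioo a b)) (nhds (rogersL x)) :=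
      ((rogersL_continuousAt hx hx1).tendsto).mono_left nhdsWithin_le_nhds
    have T3 : Tendsto (fun t : ℝ => rogersL (t / x)) (nhdsWithin x (Set.Ioo a b))
        (nhds (π ^ 2 / 6)) := by
      refine tendsto_rogersL_one.comp ?_
      refine tendsto_nhdsWithin_of_tendsto_nhds_of_eventually_within _ ?_ ?_
      · have hc : Tendsto (fun t : ℝ => t / x) (nhds x) (nhds (x / x)) :=
          ((continuous_id.div_const x).tendsto x)
        rw [div_self hx0] at hc
        exact hc.mono_left nhdsWithin_le_nhds
      · filter_upwards [self_mem_nhdsWithin] with s hs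
        have hsx := (hIfacts s hs).2.2.1
        simp only [Set.mem_compl_iff, Set.mem_singleton_iff]
        intro h
        exact hsx ((div_eq_one_iff_eq hx0).mp h)
    have T4 : Tendsto (fun t : ℝ => rogersL ((t - 1) / (x - 1))) (nhdsWithin x (Set.Ioo a b))
        (nhds (π ^ 2 / 6)) := by
      refine tendsto_rogersL_one.comp ?_
      refine tendsto_nhdsWithin_of_tendsto_nhds_of_eventually_within _ ?_ ?_
      · have hc : Tendsto (fun t : ℝ => (t - 1) / (x - 1)) (nhds x)
            (nhds ((x - 1) / (x - 1))) :=
          (((continuous_id.sub continuous_const).div_const (x - 1)).tendsto x)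
        rw [div_self hx1'] at hc
        exact hc.mono_left nhdsWithin_le_nhds
      · filter_upwards [self_mem_nhdsWithin] with s hs
        have hsx := (hIfacts s hs).2.2.1
        simp only [Set.mem_compl_iff, Set.mem_singleton_iff]
        intro h
        have := (div_eq_one_iff_eq hx1').mp h
        exact hsx (by linarith)
    have T5 : Tendsto (fun t : ℝ => rogersL ((1 - 1 / t) / (1 - 1 / x)))
        (nhdsWithin x (Set.Ioo a b)) (nhds (π ^ 2 / 6)) := by
      refine tendsto_rogersL_one.comp ?_
      refine tendsto_nhdsWithin_of_tendsto_nhds_of_eventually_within _ ?_ ?_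
      · have hcin : ContinuousAt (fun t : ℝ => (1 - 1 / t) / (1 - 1 / x)) x := by
          have hi : ContinuousAt (fun t : ℝ => 1 / t) x := by
            simpa [one_div] using continuousAt_inv₀ hx0
          exact (continuousAt_const.sub hi).div_const _
        have hc := hcin.tendsto
        have hval : (1 - 1 / x) / (1 - 1 / x) = 1 := div_self h1x0
        rw [hval] at hc
        exact hc.mono_left nhdsWithin_le_nhds
      · filter_upwards [self_mem_nhdsWithin] with s hs
        have hsx := (hIfacts s hs).2.2.1
        have hs0 : s ≠ 0 := ne_of_gt (hIfacts s hs).1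
        simp only [Set.mem_compl_iff, Set.mem_singleton_iff]
        intro h
        have h' := (div_eq_one_iff_eq h1x0).mp h
        have : 1 / s = 1 / x := by linarith
        apply hsx
        field_simp at this
        linarith
    exact (((T1.sub T2).add T3).sub T4).add T5
  have hGt0 : G t0 = π ^ 2 / 6 := by
    have hT2 : Tendsto G (nhdsWithin x (Set.Ioo a b)) (nhds (G t0)) := by
      refine Tendsto.congr' ?_ tendsto_const_nhds
      filter_upwards [self_mem_nhdsWithin] with s hs
      exact hconst t0 ht0I s hs
    have := tendsto_nhds_unique hT2 hlim
    rw [this]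
    ring
  have hfinal : G y = π ^ 2 / 6 := by rw [hGy, hGt0]
  have hGyexp : G y = rogersL x - rogersL y + rogersL (y / x) - rogersL ((y - 1) / (x - 1))
      + rogersL ((1 - 1 / y) / (1 - 1 / x)) := rfl
  rw [← hGyexp, hfinal]
  push_cast
  ring
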